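/- If G is a connected simple graph with maximum degree Δ = 3, then the zero forcing number of G satisfies Z(G) ≤ β(G) + 1. -/

import Mathlib

open SimpleGraph

namespace ZFPaper

variable {V : Type*} {W : Type*}

/-- The degree of a vertex, as the cardinality of its neighbor set. -/
noncomputable def degSet (G : SimpleGraph V) (v : V) : ℕ := (G.neighborSet v).ncard

/-- The maximum degree of a graph. -/
noncomputable def maxDeg (G : SimpleGraph V) : ℕ := sSup {d : ℕ | ∃ v, degSet G v = d}

/-- The minimum degree of a graph. -/
noncomputable def minDeg (G : SimpleGraph V) : ℕ := sInf {d : ℕ | ∃ v, degSet G v = d}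

/-- A set of vertices is a vertex cover if every edge has an endpoint in it. -/
def IsVC (G : SimpleGraph V) (C : Set V) : Prop :=
  ∀ ⦃u w : V⦄, G.Adj u w → u ∈ C ∨ w ∈ C

/-- The vertex cover number β(G). -/
noncomputable def vcNum (G : SimpleGraph V) : ℕ :=
  sInf {m : ℕ | ∃ C : Set V, IsVC G C ∧ C.ncard = m}

/-- A set of vertices is independent if its vertices are pairwise non-adjacent. -/
def IsIndep (G : SimpleGraph V) (S : Set V) : Prop :=
  ∀ ⦃u : V⦄, u ∈ S → ∀ ⦃w : V⦄, w ∈ S → ¬ G.Adj u w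

/-- The independence number α(G). -/
noncomputable def indepNum (G : SimpleGraph V) : ℕ :=
  sSup {m : ℕ | ∃ S : Set V, IsIndep G S ∧ S.ncard = m}

/-- `Forced G B v` means that, starting from the blue set `B`, the vertex `v` is
eventually colored blue by the zero forcing process: a blue vertex with a unique
white neighbor forces that neighbor to become blue. -/
inductive Forced (G : SimpleGraph V) (B : Set V) : V → Prop
  | init : ∀ v ∈ B, Forced G B v
  | force : ∀ u w : V, Forced G B u → G.Adj u w →
      (∀ x : V, G.Adj u x → x ≠ w → Forced G B x) → Forced G B w

/-- A zero forcing set: iterating the forcing process colors every vertex blue. -/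
def IsZFS (G : SimpleGraph V) (B : Set V) : Prop := ∀ v : V, Forced G B v

/-- The zero forcing number Z(G). -/
noncomputable def zfNum (G : SimpleGraph V) : ℕ :=
  sInf {m : ℕ | ∃ B : Set V, IsZFS G B ∧ B.ncard = m}

/-- A graph is claw-free if it has no induced `K_{1,3}`. -/
def ClawFree (G : SimpleGraph V) : Prop :=
  ¬ ∃ (v a b c : V), G.Adj v a ∧ G.Adj v b ∧ G.Adj v c ∧
      a ≠ b ∧ a ≠ c ∧ b ≠ c ∧ ¬ G.Adj a b ∧ ¬ G.Adj a c ∧ ¬ G.Adj b c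

/-- The join `G ∨ H` of two graphs: disjoint union plus all edges between the parts. -/
def joinG (G : SimpleGraph V) (H : SimpleGraph W) : SimpleGraph (V ⊕ W) where
  Adj a b :=
    (∃ u v, a = Sum.inl u ∧ b = Sum.inl v ∧ G.Adj u v) ∨
    (∃ u v, a = Sum.inr u ∧ b = Sum.inr v ∧ H.Adj u v) ∨
    (∃ u v, a = Sum.inl u ∧ b = Sum.inr v) ∨
    (∃ u v, a = Sum.inr u ∧ b = Sum.inl v)
  symm := by
    constructor
    rintro a b (⟨u, v, rfl, rfl, h⟩ | ⟨u, v, rfl, rfl, h⟩ | ⟨u, v, rfl, rfl⟩ | ⟨u, v, rfl, rfl⟩)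
    · exact Or.inl ⟨v, u, rfl, rfl, h.symm⟩
    · exact Or.inr (Or.inl ⟨v, u, rfl, rfl, h.symm⟩)
    · exact Or.inr (Or.inr (Or.inr ⟨v, u, rfl, rfl⟩))
    · exact Or.inr (Or.inr (Or.inl ⟨v, u, rfl, rfl⟩))
  loopless := by
    constructor
    rintro a (⟨u, v, rfl, h, hadj⟩ | ⟨u, v, rfl, h, hadj⟩ | ⟨u, v, rfl, h⟩ | ⟨u, v, rfl, h⟩) <;>
      simp_all

/-- The graph obtained from `G` by a `k`-leaf support vertex addition at `v`:
a new support vertex `w = Sum.inr none` is attached to `v`, and `k` new leaves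
`Sum.inr (some i)` are attached to `w`. -/
def lsva (G : SimpleGraph V) (v : V) (k : ℕ) : SimpleGraph (V ⊕ Option (Fin k)) where
  Adj a b :=
    (∃ x y, a = Sum.inl x ∧ b = Sum.inl y ∧ G.Adj x y) ∨
    (a = Sum.inl v ∧ b = Sum.inr none) ∨
    (a = Sum.inr none ∧ b = Sum.inl v) ∨
    (∃ i : Fin k, a = Sum.inr none ∧ b = Sum.inr (some i)) ∨
    (∃ i : Fin k, a = Sum.inr (some i) ∧ b = Sum.inr none)
  symm := by
    constructor
    rintro a b (⟨x, y, rfl, rfl, h⟩ | ⟨rfl, rfl⟩ | ⟨rfl, rfl⟩ | ⟨i, rfl, rfl⟩ | ⟨i, rfl, rfl⟩)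
    · exact Or.inl ⟨y, x, rfl, rfl, h.symm⟩
    · exact Or.inr (Or.inr (Or.inl ⟨rfl, rfl⟩))
    · exact Or.inr (Or.inl ⟨rfl, rfl⟩)
    · exact Or.inr (Or.inr (Or.inr (Or.inr ⟨i, rfl, rfl⟩)))
    · exact Or.inr (Or.inr (Or.inr (Or.inl ⟨i, rfl, rfl⟩)))
  loopless := by
    constructor
    rintro a (⟨x, y, rfl, h, hadj⟩ | ⟨rfl, h⟩ | ⟨rfl, h⟩ | ⟨i, rfl, h⟩ | ⟨i, rfl, h⟩) <;> simp_all

/-- `LSVAChain m G H` means `H` is obtained from `G` by a finite sequence of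
`m`-leaf support vertex additions (each applied at a vertex of degree at most `m-1`). -/
inductive LSVAChain (m : ℕ) : {α : Type} → SimpleGraph α → {β : Type} → SimpleGraph β → Prop
  | refl {α : Type} (G : SimpleGraph α) : LSVAChain m G G
  | step {α : Type} {G : SimpleGraph α} {β : Type} {H : SimpleGraph β} (v : β)
      (hv : (H.neighborSet v).ncard ≤ m - 1) :
      LSVAChain m G H → LSVAChain m G (lsva H v m)

/-- The graph obtained from the complete graph `K_n` by attaching one pendant
vertex to each vertex in the set `A`. -/
def pendantKn (n : ℕ) (A : Finset (Fin n)) : SimpleGraph (Fin n ⊕ {a : Fin n // a ∈ A}) where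
  Adj a b :=
    (∃ x y : Fin n, a = Sum.inl x ∧ b = Sum.inl y ∧ x ≠ y) ∨
    (∃ p : {a : Fin n // a ∈ A}, a = Sum.inl p.1 ∧ b = Sum.inr p) ∨
    (∃ p : {a : Fin n // a ∈ A}, a = Sum.inr p ∧ b = Sum.inl p.1)
  symm := by
    constructor
    rintro a b (⟨x, y, rfl, rfl, h⟩ | ⟨p, rfl, rfl⟩ | ⟨p, rfl, rfl⟩)
    · exact Or.inl ⟨y, x, rfl, rfl, h.symm⟩
    · exact Or.inr (Or.inr ⟨p, rfl, rfl⟩)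
    · exact Or.inr (Or.inl ⟨p, rfl, rfl⟩)
  loopless := by
    constructor
    rintro a (⟨x, y, rfl, h, hne⟩ | ⟨p, rfl, h⟩ | ⟨p, rfl, h⟩) <;> simp_all

/-- The graph obtained from a cycle `C_k` with vertices `v_1, …, v_k` (the `Sum.inl`
vertices) together with disjoint complete graphs `K_{n i}` (the `Sum.inr` vertices),
where every vertex of the `i`-th complete graph is joined to both `v_i` and `v_{i+1}`
(indices mod `k`). -/
def cycleCliques (k : ℕ) (n : Fin k → ℕ) :
    SimpleGraph (Fin k ⊕ Σ i : Fin k, Fin (n i)) where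
  Adj a b :=
    match a, b with
    | Sum.inl i, Sum.inl j =>
        i ≠ j ∧ ((j : ℕ) = ((i : ℕ) + 1) % k ∨ (i : ℕ) = ((j : ℕ) + 1) % k)
    | Sum.inl j, Sum.inr s => (j : ℕ) = (s.1 : ℕ) ∨ (j : ℕ) = ((s.1 : ℕ) + 1) % k
    | Sum.inr s, Sum.inl j => (j : ℕ) = (s.1 : ℕ) ∨ (j : ℕ) = ((s.1 : ℕ) + 1) % k
    | Sum.inr s, Sum.inr t => s ≠ t ∧ s.1 = t.1
  symm := by
    constructor
    rintro (i | s) (j | t) h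
    · exact ⟨Ne.symm h.1, h.2.symm⟩
    · exact h
    · exact h
    · exact ⟨Ne.symm h.1, h.2.symm⟩
  loopless := by
    constructor
    rintro (i | s) h
    · exact h.1 rfl
    · exact h.1 rfl


section Aux

variable {V : Type*}

/-- Vertices reachable from a vertex of a set closed under adjacency stay in the set. -/
lemma walk_closed {G : SimpleGraph V} {T : Set V}
    (hT : ∀ a ∈ T, ∀ b, G.Adj a b → b ∈ T) {x y : V} (w : G.Walk x y) :
    x ∈ T → y ∈ T := by
  induction w with
  | nil => exact id
  | cons h _ ih => exact fun hx => ih (hT _ hx _ h)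

/-- Transfer of a zero forcing process on an induced subgraph to the ambient graph,
provided all outside neighbors of the induced part are forced. -/
lemma forced_of_induce {G : SimpleGraph V} {S : Set V} {B : Set V} {B' : Set ↥S}
    (hB' : ∀ v ∈ B', Forced G B (v : V))
    (hout : ∀ u : ↥S, ∀ x : V, G.Adj (u : V) x → x ∉ S → Forced G B x)
    (hZ : IsZFS (G.induce S) B') : ∀ v : ↥S, Forced G B (v : V) := by
  intro v
  induction hZ v with
  | init u hu => exact hB' u hu
  | force u w _ hadj _ ihu ihall =>
    have hadj' : G.Adj (u : V) (w : V) := hadj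
    refine Forced.force (u : V) (w : V) ihu hadj' ?_
    intro x hx hxw
    by_cases hxS : x ∈ S
    · exact ihall ⟨x, hxS⟩ hx (fun h => hxw (congrArg Subtype.val h))
    · exact hout u x hx hxS

universe u

/-- Key lemma: a connected graph with all degrees at most `3` has a zero
forcing set of cardinality at most `β(G) + 1`. -/
lemma key_zf_le_vc :
    ∀ (n : ℕ) (V : Type u) [Fintype V] (G : SimpleGraph V),
    Fintype.card V ≤ n → G.Connected → (∀ v, (G.neighborSet v).ncard ≤ 3) →
    ∃ B : Set V, IsZFS G B ∧ B.ncard ≤ vcNum G + 1 := by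
  intro n
  induction n with
  | zero =>
    intro V _ G hcard hconn _
    have : Nonempty V := hconn.nonempty
    have := Fintype.card_pos (α := V)
    omega
  | succ n IH =>
    intro V _ G hcard hconn hdeg
    classical
    have hvcne : {m : ℕ | ∃ C : Set V, IsVC G C ∧ C.ncard = m}.Nonempty :=
      ⟨(Set.univ : Set V).ncard, Set.univ, fun u w _ => Or.inl (Set.mem_univ u), rfl⟩
    obtain ⟨C, hC, hCcard⟩ : ∃ C : Set V, IsVC G C ∧ C.ncard = vcNum G := Nat.sInf_mem hvcne
    rcases Nat.lt_or_ge (vcNum G) 2 with hsmall | h2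
    · -- base cases : vcNum G ≤ 1
      rcases Nat.lt_or_ge (vcNum G) 1 with h0 | h1
      · -- vcNum G = 0 : no edges, a single vertex
        have hC0 : C = ∅ := by
          rw [← Set.ncard_eq_zero (Set.toFinite C)]; omega
        have hnoadj : ∀ u w : V, ¬ G.Adj u w := by
          intro u w h
          rcases hC h with h' | h' <;> simp [hC0] at h'
        have hsub : ∀ a b : V, a = b := by
          intro a b
          obtain ⟨w⟩ := hconn.preconnected a b
          cases w with
          | nil => rfl
          | cons h _ => exact absurd h (hnoadj _ _)
        refine ⟨Set.univ, fun v => Forced.init v (Set.mem_univ v), ?_⟩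
        have : Subsingleton V := ⟨hsub⟩
        have h1 : (Set.univ : Set V).ncard = Nat.card V := Set.ncard_univ V
        have h2 : Nat.card V ≤ 1 := by
          rw [Nat.card_eq_fintype_card]
          exact Fintype.card_le_one_iff_subsingleton.mpr this
        omega
      · -- vcNum G = 1 : a star
        have h1' : vcNum G = 1 := by omega
        obtain ⟨c0, hc0⟩ : ∃ c0, C = {c0} := Set.ncard_eq_one.mp (by omega)
        subst hc0
        have hcov : ∀ u w : V, G.Adj u w → u = c0 ∨ w = c0 := by
          intro u w h; simpa using hC h
        have hnb : ∀ v : V, v ≠ c0 → ∀ x, G.Adj v x → x = c0 := by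
          intro v hv x hx
          rcases hcov v x hx with h | h
          · exact absurd h hv
          · exact h
        have hAdjc0 : ∀ v : V, v ≠ c0 → G.Adj v c0 := by
          intro v hv
          obtain ⟨w⟩ := hconn.preconnected v c0
          cases w with
          | nil => exact absurd rfl hv
          | cons h _ => rcases hcov _ _ h with h' | h'
                        · exact absurd h' hv
                        · exact h' ▸ h
        set L : Set V := {v | v ≠ c0} with hL
        have hLsub : L ⊆ G.neighborSet c0 := fun v hv => (hAdjc0 v hv).symm
        have hL3 : L.ncard ≤ 3 := le_trans (Set.ncard_le_ncard hLsub (Set.toFinite _)) (hdeg c0)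
        rcases Nat.lt_or_ge L.ncard 2 with hLs | hLb
        · -- at most one leaf
          refine ⟨{c0}, ?_, by simp [h1']⟩
          intro v
          by_cases hv : v = c0
          · subst hv
            exact Forced.init v rfl
          · refine Forced.force c0 v (Forced.init c0 rfl) (hAdjc0 v hv).symm ?_
            intro x hx hxv
            exfalso
            have hxc0 : x ≠ c0 := hx.ne'
            have hvL : v ∈ L := hv
            have hxL : x ∈ L := hxc0
            have : x = v := by
              by_contra hxv'
              have hp : ({x, v} : Set V) ⊆ L := by
                intro y hy; rcases hy with rfl | rfl
                · exact hxL
                · exact hvL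
              have := Set.ncard_le_ncard hp (Set.toFinite _)
              rw [Set.ncard_pair hxv'] at this
              omega
            exact hxv this
        · -- two or three leaves
          obtain ⟨l0, hl0⟩ : L.Nonempty := Set.nonempty_of_ncard_ne_zero (by omega)
          obtain ⟨l1, hl1, hl10⟩ := Set.exists_ne_of_one_lt_ncard (by omega : 1 < L.ncard) l0
          refine ⟨L \ {l0}, ?_, ?_⟩
          · have hFc0 : Forced G (L \ {l0}) c0 := by
              refine Forced.force l1 c0 (Forced.init l1 ⟨hl1, hl10⟩) (hAdjc0 l1 hl1) ?_
              intro x hx hxc0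
              exact absurd (hnb l1 hl1 x hx) hxc0
            intro v
            by_cases hv : v = c0
            · exact hv ▸ hFc0
            by_cases hv0 : v = l0
            · subst hv0
              refine Forced.force c0 v hFc0 (hAdjc0 v hv).symm ?_
              intro x hx hxv
              exact Forced.init x ⟨hx.ne', hxv⟩
            · exact Forced.init v ⟨hv, hv0⟩
          · have := Set.ncard_diff_singleton_of_mem hl0
            omega
    · -- main inductive step : vcNum G ≥ 2
      have hCn : C.Nonempty := Set.nonempty_of_ncard_ne_zero (by omega)
      obtain ⟨r, hr⟩ := hCn
      obtain ⟨c, hcC, hcmax⟩ :=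
        Set.exists_max_image C (fun y => G.dist r y) (Set.toFinite C) ⟨r, hr⟩
      obtain ⟨c', hc'C, hc'r⟩ := Set.exists_ne_of_one_lt_ncard (by omega : 1 < C.ncard) r
      have hdrc' : G.dist r c' ≠ 0 := by
        intro h
        rcases SimpleGraph.dist_eq_zero_iff_eq_or_not_reachable.mp h with h' | h'
        · exact hc'r h'.symm
        · exact h' (hconn.preconnected r c')
      have hcr : c ≠ r := by
        intro h
        have h1 := hcmax c' hc'C
        simp only [h, SimpleGraph.dist_self, Nat.le_zero] at h1
        exact hdrc' h1
      set P : Set V := {w : V | w ∉ C ∧ ∀ x, G.Adj w x → x = c} with hP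
      set S : Set V := {v : V | v ≠ c ∧ v ∉ P} with hS
      have hcS : c ∉ S := fun h => h.1 rfl
      have hrS : r ∈ S := ⟨fun h => hcr h.symm, fun h => h.1 hr⟩
      have hnotS : ∀ x : V, x ∉ S → c = x ∨ x ∈ P := by
        intro x hx
        by_cases h1 : x = c
        · exact Or.inl h1.symm
        · by_cases h2 : x ∈ P
          · exact Or.inr h2
          · exact absurd ⟨h1, h2⟩ hx
      have hPadj : ∀ p ∈ P, G.Adj p c := by
        intro p hp
        have hpc : p ≠ c := fun h => (h ▸ hp.1) hcC
        obtain ⟨w⟩ := hconn.preconnected p c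
        cases w with
        | nil => exact absurd rfl hpc
        | cons h _ => exact (hp.2 _ h) ▸ h
      have hPsub : P ⊆ G.neighborSet c := fun p hp => (hPadj p hp).symm
      have hPadjonly : ∀ p ∈ P, ∀ u : V, G.Adj u p → u = c := by
        intro p hp u hu
        exact hp.2 u hu.symm
      -- reachability within the induced graph
      have reach : ∀ k : ℕ, ∀ u : V, ∀ hu : u ∈ S, G.dist r u ≤ k →
          (G.induce S).Reachable ⟨u, hu⟩ ⟨r, hrS⟩ := by
        intro k
        induction k with
        | zero =>
          intro u hu hd
          have h0 : G.dist r u = 0 := by omega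
          rcases SimpleGraph.dist_eq_zero_iff_eq_or_not_reachable.mp h0 with h' | h'
          · subst h'; rfl
          · exact absurd (hconn.preconnected r u) h'
        | succ k ih =>
          intro u hu hd
          by_cases hur : u = r
          · subst hur; rfl
          · have hru : G.Reachable u r := hconn.preconnected u r
            obtain ⟨w, hwlen⟩ := hru.exists_walk_length_eq_dist
            cases w with
            | nil => exact absurd rfl hur
            | @cons _ x _ h q =>
              have hqlen : q.length + 1 = G.dist u r := by simpa using hwlen
              have hdru : G.dist u r = G.dist r u := SimpleGraph.dist_comm
              have hdxr : G.dist x r ≤ q.length := SimpleGraph.dist_le q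
              by_cases hxS : x ∈ S
              · have hreach := ih x hxS (by rw [SimpleGraph.dist_comm]; omega)
                have hadj : (G.induce S).Adj ⟨u, hu⟩ ⟨x, hxS⟩ := h
                exact hadj.reachable.trans hreach
              · rcases hnotS x hxS with rfl | hxP
                · -- x = c
                  by_cases huC : u ∈ C
                  · exfalso
                    have h1 : G.dist r u ≤ G.dist r c := hcmax u huC
                    have h2 : G.dist r c = G.dist c r := SimpleGraph.dist_comm
                    omega
                  · -- u is white, has another cover neighbor z
                    have hz : ∃ z, G.Adj u z ∧ z ≠ c := by
                      by_contra hcon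
                      push_neg at hcon
                      exact hu.2 ⟨huC, fun y hy => hcon y hy⟩
                    obtain ⟨z, hzadj, hzc⟩ := hz
                    have hzC : z ∈ C := by
                      rcases hC hzadj with h' | h'
                      · exact absurd h' huC
                      · exact h'
                    have hzS : z ∈ S := ⟨hzc, fun h' => h'.1 hzC⟩
                    have hdz : G.dist r z ≤ k := by
                      have h1 : G.dist r z ≤ G.dist r c := hcmax z hzC
                      have h2 : G.dist r c = G.dist c r := SimpleGraph.dist_comm
                      omega
                    have hreach := ih z hzS hdz
                    have hadj : (G.induce S).Adj ⟨u, hu⟩ ⟨z, hzS⟩ := hzadj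
                    exact hadj.reachable.trans hreach
                · exact absurd (hPadjonly x hxP u h) hu.1
      have hconn' : (G.induce S).Connected := by
        refine (SimpleGraph.connected_iff_exists_forall_reachable (G.induce S)).mpr ⟨⟨r, hrS⟩, fun w => ?_⟩
        exact (reach (G.dist r (w : V)) (w : V) w.2 le_rfl).symm
      -- cardinality decreases
      have hcardS : Fintype.card ↥S ≤ n := by
        have hnotmem : c ∉ Set.range (Subtype.val : ↥S → V) := by
          rintro ⟨⟨x, hx⟩, hxc⟩
          exact hcS (hxc ▸ hx)
        have : Fintype.card ↥S < Fintype.card V :=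
          Fintype.card_lt_of_injective_of_notMem Subtype.val Subtype.val_injective hnotmem
        omega
      -- degrees in the induced graph
      have hdeg' : ∀ v : ↥S, ((G.induce S).neighborSet v).ncard ≤ 3 := by
        intro v
        have h1 : (Subtype.val '' ((G.induce S).neighborSet v)).ncard
            = ((G.induce S).neighborSet v).ncard :=
          Set.ncard_image_of_injective _ Subtype.val_injective
        have h2 : Subtype.val '' ((G.induce S).neighborSet v) ⊆ G.neighborSet (v : V) := by
          rintro _ ⟨w, hw, rfl⟩
          exact hw
        calc ((G.induce S).neighborSet v).ncard
            = (Subtype.val '' ((G.induce S).neighborSet v)).ncard := h1.symm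
          _ ≤ (G.neighborSet (v : V)).ncard := Set.ncard_le_ncard h2 (Set.toFinite _)
          _ ≤ 3 := hdeg (v : V)
      obtain ⟨B', hB'zfs, hB'card⟩ := IH ↥S (G.induce S) hcardS hconn' hdeg'
      -- vertex cover number of the induced graph
      have hvc' : vcNum (G.induce S) ≤ vcNum G - 1 := by
        have hCvc : IsVC (G.induce S) {x : ↥S | (x : V) ∈ C} := by
          intro u w hadj
          exact (hC hadj).imp id id
        have h3 : vcNum (G.induce S) ≤ ({x : ↥S | (x : V) ∈ C}).ncard :=
          Nat.sInf_le ⟨_, hCvc, rfl⟩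
        have h4 : (Subtype.val '' {x : ↥S | (x : V) ∈ C}).ncard
            = ({x : ↥S | (x : V) ∈ C}).ncard :=
          Set.ncard_image_of_injective _ Subtype.val_injective
        have h5 : Subtype.val '' {x : ↥S | (x : V) ∈ C} ⊆ C \ {c} := by
          rintro _ ⟨x, hx, rfl⟩
          exact ⟨hx, x.2.1⟩
        have h6 : (C \ {c}).ncard = C.ncard - 1 :=
          Set.ncard_diff_singleton_of_mem hcC
        have h7 := Set.ncard_le_ncard h5 (Set.toFinite _)
        omega
      have hB'le : B'.ncard ≤ vcNum G := by omega
      -- size of P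
      have hP3 : P.ncard ≤ 3 := le_trans (Set.ncard_le_ncard hPsub (Set.toFinite _)) (hdeg c)
      have hPne3 : P.ncard ≤ 2 := by
        by_contra hcon
        have hPeq : P = G.neighborSet c := by
          refine Set.eq_of_subset_of_ncard_le hPsub ?_ (Set.toFinite _)
          have := hdeg c
          omega
        have hT : ∀ a ∈ insert c P, ∀ b, G.Adj a b → b ∈ insert c P := by
          intro a ha b hab
          rcases ha with rfl | haP
          · right; rw [hPeq]; exact hab
          · left; exact haP.2 b hab
        have hall : ∀ v : V, v ∈ insert c P := by
          intro v
          obtain ⟨w⟩ := hconn.preconnected c v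
          exact walk_closed hT w (Set.mem_insert c P)
        have hVC1 : IsVC G {c} := by
          intro u w hadj
          rcases hall u with rfl | huP
          · exact Or.inl rfl
          · exact Or.inr (huP.2 w hadj)
        have hle : vcNum G ≤ ({c} : Set V).ncard := Nat.sInf_le ⟨{c}, hVC1, rfl⟩
        rw [Set.ncard_singleton] at hle
        omega
      rcases Nat.lt_or_ge P.ncard 2 with hP1 | hP2
      · -- |P| ≤ 1 : B = B' ∪ {c}
        set B : Set V := (Subtype.val '' B') ∪ {c} with hB
        have hcB : c ∈ B := Or.inr rfl
        have hFc : Forced G B c := Forced.init c hcB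
        have hsim : ∀ v : ↥S, Forced G B (v : V) := by
          refine forced_of_induce (fun v hv => Forced.init _ (Or.inl ⟨v, hv, rfl⟩)) ?_ hB'zfs
          intro u x hadj hxS
          rcases hnotS x hxS with rfl | hxP
          · exact hFc
          · exact absurd (hPadjonly x hxP _ hadj) u.2.1
        have hFp : ∀ p ∈ P, Forced G B p := by
          intro p hp
          refine Forced.force c p hFc (hPadj p hp).symm ?_
          intro x hx hxp
          by_cases hxS : x ∈ S
          · exact hsim ⟨x, hxS⟩
          · rcases hnotS x hxS with rfl | hxP
            · exact absurd rfl hx.ne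
            · exfalso
              have hpair : ({p, x} : Set V) ⊆ P := by
                intro y hy; rcases hy with rfl | rfl
                · exact hp
                · exact hxP
              have := Set.ncard_le_ncard hpair (Set.toFinite _)
              rw [Set.ncard_pair (fun h => hxp h.symm)] at this
              omega
        refine ⟨B, ?_, ?_⟩
        · intro v
          by_cases hv : v ∈ S
          · exact hsim ⟨v, hv⟩
          · rcases hnotS v hv with rfl | hvP
            · exact hFc
            · exact hFp v hvP
        · have hu1 := Set.ncard_union_le (Subtype.val '' B') ({c} : Set V)
          rw [← hB] at hu1
          have hu2 : (Subtype.val '' B').ncard = B'.ncard :=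
            Set.ncard_image_of_injective _ Subtype.val_injective
          have hu3 : ({c} : Set V).ncard = 1 := Set.ncard_singleton c
          omega
      · -- |P| = 2 : B = B' ∪ {p1}
        have hP2' : P.ncard = 2 := le_antisymm hPne3 hP2
        obtain ⟨p1, p2, hp12, hPeq⟩ := Set.ncard_eq_two.mp hP2'
        have hp1P : p1 ∈ P := by rw [hPeq]; exact Or.inl rfl
        have hp2P : p2 ∈ P := by rw [hPeq]; exact Or.inr rfl
        set B : Set V := (Subtype.val '' B') ∪ {p1} with hB
        have hF1 : Forced G B p1 := Forced.init p1 (Or.inr rfl)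
        have hFc : Forced G B c := by
          refine Forced.force p1 c hF1 (hPadj p1 hp1P) ?_
          intro x hx hxc
          exact absurd (hp1P.2 x hx) hxc
        have hsim : ∀ v : ↥S, Forced G B (v : V) := by
          refine forced_of_induce (fun v hv => Forced.init _ (Or.inl ⟨v, hv, rfl⟩)) ?_ hB'zfs
          intro u x hadj hxS
          rcases hnotS x hxS with rfl | hxP
          · exact hFc
          · exact absurd (hPadjonly x hxP _ hadj) u.2.1
        have hFp2 : Forced G B p2 := by
          refine Forced.force c p2 hFc (hPadj p2 hp2P).symm ?_
          intro x hx hxp2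
          by_cases hxS : x ∈ S
          · exact hsim ⟨x, hxS⟩
          · rcases hnotS x hxS with rfl | hxP
            · exact absurd rfl hx.ne
            · rw [hPeq] at hxP
              rcases hxP with rfl | rfl
              · exact hF1
              · exact absurd rfl hxp2
        refine ⟨B, ?_, ?_⟩
        · intro v
          by_cases hv : v ∈ S
          · exact hsim ⟨v, hv⟩
          · rcases hnotS v hv with rfl | hvP
            · exact hFc
            · rw [hPeq] at hvP
              rcases hvP with rfl | rfl
              · exact hF1
              · exact hFp2
        · have hu1 := Set.ncard_union_le (Subtype.val '' B') ({p1} : Set V)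
          rw [← hB] at hu1
          have hu2 : (Subtype.val '' B').ncard = B'.ncard :=
            Set.ncard_image_of_injective _ Subtype.val_injective
          have hu3 : ({p1} : Set V).ncard = 1 := Set.ncard_singleton p1
          omega

end Aux

/-- For a connected graph with maximum degree `Δ = 3`,
`Z(G) ≤ β(G) + 1`. -/
theorem stmt3 {V : Type*} [Fintype V] (G : SimpleGraph V)
    (hconn : G.Connected) (hdelta : maxDeg G = 3) :
    zfNum G ≤ vcNum G + 1 := by
  classical
  have hdeg : ∀ v, (G.neighborSet v).ncard ≤ 3 := by
    intro v
    have hbdd : BddAbove {d : ℕ | ∃ v, degSet G v = d} := by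
      refine ⟨Fintype.card V, ?_⟩
      rintro d ⟨w, rfl⟩
      have h1 : (G.neighborSet w).ncard ≤ (Set.univ : Set V).ncard :=
        Set.ncard_le_ncard (Set.subset_univ _) (Set.toFinite _)
      have h2 : (Set.univ : Set V).ncard = Nat.card V := Set.ncard_univ V
      have h3 : Nat.card V = Fintype.card V := Nat.card_eq_fintype_card
      calc degSet G w = (G.neighborSet w).ncard := rfl
        _ ≤ (Set.univ : Set V).ncard := h1
        _ = Fintype.card V := by rw [h2, h3]
    have h := le_csSup hbdd (⟨v, rfl⟩ : degSet G v ∈ {d : ℕ | ∃ v, degSet G v = d})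
    have h' : sSup {d : ℕ | ∃ v, degSet G v = d} = 3 := hdelta
    rw [h'] at h
    exact h
  obtain ⟨B, hZ, hcard⟩ := key_zf_le_vc (Fintype.card V) V G le_rfl hconn hdeg
  have hle : zfNum G ≤ B.ncard := Nat.sInf_le ⟨B, hZ, rfl⟩
  exact le_trans hle hcard


end ZFPaper
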